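/- Let C be a category with pullbacks and binary coproducts in which every binary coproduct cocone is stable under pullback. Let L be a pullback of the two coproduct injections inl : X → X ⨿ Y and inr : Y → X ⨿ Y. Then any two parallel morphisms f₁, f₂ : L → Z with the same codomain are equal; in particular, if C has an initial object 0, the unique morphism 0 → L is an epimorphism. -/

import Mathlib

open CategoryTheory CategoryTheory.Limits

theorem my_mono_inl {C : Type*} [Category C] [HasPullbacks C] [HasBinaryCoproducts C]
    (hstable : ∀ {X Y S : C} (inl : X ⟶ S) (inr : Y ⟶ S),
      Nonempty (IsColimit (BinaryCofan.mk inl inr)) →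
      ∀ {Z : C} (f : Z ⟶ S),
        Nonempty (IsColimit (BinaryCofan.mk (pullback.snd inl f) (pullback.snd inr f))))
    (X Y : C) : Mono (coprod.inl : X ⟶ X ⨿ Y) := by
  constructor
  intro W u v h
  obtain ⟨hc⟩ := hstable (coprod.inl : X ⟶ X ⨿ Y) coprod.inr ⟨coprodIsCoprod X Y⟩
    (u ≫ coprod.inl)
  have hs : u ≫ (coprod.inl : X ⟶ X ⨿ Y) = 𝟙 W ≫ (u ≫ coprod.inl) := by simp
  have ht : v ≫ (coprod.inl : X ⟶ X ⨿ Y) = 𝟙 W ≫ (u ≫ coprod.inl) := by simp [← h]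
  set f := u ≫ (coprod.inl : X ⟶ X ⨿ Y) with hf
  let s : W ⟶ pullback (coprod.inl : X ⟶ X ⨿ Y) f := pullback.lift u (𝟙 W) hs
  let t : W ⟶ pullback (coprod.inl : X ⟶ X ⨿ Y) f := pullback.lift v (𝟙 W) ht
  let cc : BinaryCofan (pullback (coprod.inl : X ⟶ X ⨿ Y) f)
      (pullback (coprod.inr : Y ⟶ X ⨿ Y) f) :=
    BinaryCofan.mk (pullback.fst _ _) (pullback.snd _ _ ≫ u)
  have hd : pullback.snd (coprod.inl : X ⟶ X ⨿ Y) f ≫ hc.desc cc = pullback.fst _ _ := by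
    exact hc.fac cc ⟨WalkingPair.left⟩
  have hu : u = hc.desc cc := by
    have := congrArg (fun z => s ≫ z) hd
    have e1 : s ≫ pullback.fst _ _ = u := pullback.lift_fst _ _ _
    have e2 : s ≫ pullback.snd _ _ = 𝟙 W := pullback.lift_snd _ _ _
    have e3 : (s ≫ pullback.snd _ _) ≫ hc.desc cc = hc.desc cc := by
      rw [e2]; exact Category.id_comp _
    exact e1.symm.trans (this.symm.trans ((Category.assoc _ _ _).symm.trans e3))
  have hv : v = hc.desc cc := by
    have := congrArg (fun z => t ≫ z) hd
    have e1 : t ≫ pullback.fst _ _ = v := pullback.lift_fst _ _ _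
    have e2 : t ≫ pullback.snd _ _ = 𝟙 W := pullback.lift_snd _ _ _
    have e3 : (t ≫ pullback.snd _ _) ≫ hc.desc cc = hc.desc cc := by
      rw [e2]; exact Category.id_comp _
    exact e1.symm.trans (this.symm.trans ((Category.assoc _ _ _).symm.trans e3))
  rw [hu, hv]

theorem my_mono_inr {C : Type*} [Category C] [HasPullbacks C] [HasBinaryCoproducts C]
    (hstable : ∀ {X Y S : C} (inl : X ⟶ S) (inr : Y ⟶ S),
      Nonempty (IsColimit (BinaryCofan.mk inl inr)) →
      ∀ {Z : C} (f : Z ⟶ S),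
        Nonempty (IsColimit (BinaryCofan.mk (pullback.snd inl f) (pullback.snd inr f))))
    (X Y : C) : Mono (coprod.inr : Y ⟶ X ⨿ Y) := by
  constructor
  intro W u v h
  obtain ⟨hc⟩ := hstable (coprod.inl : X ⟶ X ⨿ Y) coprod.inr ⟨coprodIsCoprod X Y⟩
    (u ≫ coprod.inr)
  have hs : u ≫ (coprod.inr : Y ⟶ X ⨿ Y) = 𝟙 W ≫ (u ≫ coprod.inr) := by simp
  have ht : v ≫ (coprod.inr : Y ⟶ X ⨿ Y) = 𝟙 W ≫ (u ≫ coprod.inr) := by simp [← h]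
  set f := u ≫ (coprod.inr : Y ⟶ X ⨿ Y) with hf
  let s : W ⟶ pullback (coprod.inr : Y ⟶ X ⨿ Y) f := pullback.lift u (𝟙 W) hs
  let t : W ⟶ pullback (coprod.inr : Y ⟶ X ⨿ Y) f := pullback.lift v (𝟙 W) ht
  let cc : BinaryCofan (pullback (coprod.inl : X ⟶ X ⨿ Y) f)
      (pullback (coprod.inr : Y ⟶ X ⨿ Y) f) :=
    BinaryCofan.mk (pullback.snd _ _ ≫ u) (pullback.fst _ _)
  have hd : pullback.snd (coprod.inr : Y ⟶ X ⨿ Y) f ≫ hc.desc cc = pullback.fst _ _ := by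
    exact hc.fac cc ⟨WalkingPair.right⟩
  have hu : u = hc.desc cc := by
    have := congrArg (fun z => s ≫ z) hd
    have e1 : s ≫ pullback.fst _ _ = u := pullback.lift_fst _ _ _
    have e2 : s ≫ pullback.snd _ _ = 𝟙 W := pullback.lift_snd _ _ _
    have e3 : (s ≫ pullback.snd _ _) ≫ hc.desc cc = hc.desc cc := by
      rw [e2]; exact Category.id_comp _
    exact e1.symm.trans (this.symm.trans ((Category.assoc _ _ _).symm.trans e3))
  have hv : v = hc.desc cc := by
    have := congrArg (fun z => t ≫ z) hd
    have e1 : t ≫ pullback.fst _ _ = v := pullback.lift_fst _ _ _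
    have e2 : t ≫ pullback.snd _ _ = 𝟙 W := pullback.lift_snd _ _ _
    have e3 : (t ≫ pullback.snd _ _) ≫ hc.desc cc = hc.desc cc := by
      rw [e2]; exact Category.id_comp _
    exact e1.symm.trans (this.symm.trans ((Category.assoc _ _ _).symm.trans e3))
  rw [hu, hv]

/-- In a category with pullbacks and binary coproducts in which every
binary coproduct cocone is stable under pullback, if `L` is a pullback of the two
coproduct injections `coprod.inl : X ⟶ X ⨿ Y` and `coprod.inr : Y ⟶ X ⨿ Y`, then any
two parallel morphisms out of `L` are equal; in particular, if the category has an
initial object, the unique morphism `⊥_ C ⟶ L` is an epimorphism. -/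
theorem pullback_of_coprod_inj_subterminal {C : Type*} [Category C]
    [HasPullbacks C] [HasBinaryCoproducts C] [HasInitial C]
    (hstable : ∀ {X Y S : C} (inl : X ⟶ S) (inr : Y ⟶ S),
      Nonempty (IsColimit (BinaryCofan.mk inl inr)) →
      ∀ {Z : C} (f : Z ⟶ S),
        Nonempty (IsColimit (BinaryCofan.mk (pullback.snd inl f) (pullback.snd inr f))))
    {X Y L : C} (a : L ⟶ X) (b : L ⟶ Y)
    (comm : a ≫ (coprod.inl : X ⟶ X ⨿ Y) = b ≫ coprod.inr)
    (hL : Nonempty (IsLimit (PullbackCone.mk a b comm))) :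
    (∀ (Z : C) (f₁ f₂ : L ⟶ Z), f₁ = f₂) ∧ Epi (initial.to L) := by
  obtain ⟨hL⟩ := hL
  have key : ∀ (Z : C) (f₁ f₂ : L ⟶ Z), f₁ = f₂ := by
    intro Z f₁ f₂
    have minl : Mono (coprod.inl : Z ⟶ Z ⨿ Y) := my_mono_inl hstable Z Y
    obtain ⟨hc⟩ := hstable (coprod.inl : X ⟶ X ⨿ Y) coprod.inr ⟨coprodIsCoprod X Y⟩
      (coprod.inr : Y ⟶ X ⨿ Y)
    -- comparison map from the chosen pullback to L
    let eL : pullback (coprod.inl : X ⟶ X ⨿ Y) coprod.inr ⟶ L :=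
      PullbackCone.IsLimit.lift hL (pullback.fst _ _) (pullback.snd _ _) pullback.condition
    have heLa : eL ≫ a = pullback.fst _ _ :=
      PullbackCone.IsLimit.lift_fst hL _ _ _
    have heLb : eL ≫ b = pullback.snd _ _ :=
      PullbackCone.IsLimit.lift_snd hL _ _ _
    let e' : L ⟶ pullback (coprod.inl : X ⟶ X ⨿ Y) coprod.inr := pullback.lift a b comm
    have hsec : e' ≫ eL = 𝟙 L := by
      apply PullbackCone.IsLimit.hom_ext hL
      · exact (Category.assoc e' eL a).trans ((by rw [heLa]; exact pullback.lift_fst _ _ _ :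
          e' ≫ eL ≫ a = a).trans (Category.id_comp a).symm)
      · exact (Category.assoc e' eL b).trans ((by rw [heLb]; exact pullback.lift_snd _ _ _ :
          e' ≫ eL ≫ b = b).trans (Category.id_comp b).symm)
    -- diagonal section of pullback inr inr
    let σ : Y ⟶ pullback (coprod.inr : Y ⟶ X ⨿ Y) coprod.inr :=
      pullback.lift (𝟙 Y) (𝟙 Y) rfl
    have hσ : σ ≫ pullback.snd _ _ = 𝟙 Y := pullback.lift_snd _ _ _
    have key1 : ∀ g : L ⟶ Z,
        pullback.snd (coprod.inl : X ⟶ X ⨿ Y) (coprod.inr : Y ⟶ X ⨿ Y) ≫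
          (coprod.inr : Y ⟶ Z ⨿ Y) = (eL ≫ g) ≫ coprod.inl := by
      intro g
      let cc : BinaryCofan (pullback (coprod.inl : X ⟶ X ⨿ Y) (coprod.inr : Y ⟶ X ⨿ Y))
          (pullback (coprod.inr : Y ⟶ X ⨿ Y) (coprod.inr : Y ⟶ X ⨿ Y)) :=
        BinaryCofan.mk ((eL ≫ g) ≫ coprod.inl) (pullback.snd _ _ ≫ (coprod.inr : Y ⟶ Z ⨿ Y))
      have h1 : pullback.snd (coprod.inl : X ⟶ X ⨿ Y) coprod.inr ≫ hc.desc cc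
          = (eL ≫ g) ≫ coprod.inl := by
        exact hc.fac cc ⟨WalkingPair.left⟩
      have h2 : pullback.snd (coprod.inr : Y ⟶ X ⨿ Y) coprod.inr ≫ hc.desc cc
          = pullback.snd _ _ ≫ coprod.inr := by
        exact hc.fac cc ⟨WalkingPair.right⟩
      have hdesc : hc.desc cc = coprod.inr := by
        have := congrArg (fun z => σ ≫ z) h2
        have e3 : ∀ (T : C) (k : Y ⟶ T),
            σ ≫ pullback.snd (coprod.inr : Y ⟶ X ⨿ Y) coprod.inr ≫ k = k := fun T k => by
          rw [← Category.assoc, hσ, Category.id_comp]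
        exact (e3 _ _).symm.trans (this.trans (e3 _ _))
      rw [← h1, hdesc]
      rfl
    have h3 : eL ≫ f₁ = eL ≫ f₂ := by
      have := (key1 f₁).symm.trans (key1 f₂)
      rwa [cancel_mono] at this
    calc f₁ = (e' ≫ eL) ≫ f₁ := by rw [hsec]; simp
    _ = (e' ≫ eL) ≫ f₂ := by rw [Category.assoc, Category.assoc, h3]
    _ = f₂ := by rw [hsec]; simp
  exact ⟨key, ⟨fun g h _ => key _ g h⟩⟩
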